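/- Let m ≥ 2 and let G and H be finite families of finite subsets of a finite type V such that every set in G has cardinality at least m and every set h ∈ H satisfies 3·|h| < m. Suppose there are s pairs (B_1, C_1), …, (B_s, C_s) of finite families of finite subsets of V such that B_i ∨ C_i ⊆ G ∪ H for every i, and for every g ∈ G there exist an index i and sets b ∈ B_i, c ∈ C_i with b ∪ c = g and m < 3·|b| ≤ 2m. Then there exists a natural number r with m < 3r ≤ 2m such that |G| ≤ s · deg_r(G) · deg_{m−r}(G). -/

import Mathlib

/-- The `r`-th degree of a finite family `A` of subsets of a finite type `V`. -/
def famDeg {V : Type*} [Fintype V] [DecidableEq V]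
    (A : Finset (Finset V)) (r : ℕ) : ℕ :=
  ((Finset.univ : Finset V).powersetCard r).sup fun b =>
    (A.filter fun a => b ⊆ a).card

/-- The join `B ∨ C` of two families: all pairwise unions. -/
def famJoin {V : Type*} [DecidableEq V]
    (B C : Finset (Finset V)) : Finset (Finset V) :=
  (B ×ˢ C).image fun p => p.1 ∪ p.2

lemma filter_card_le_famDeg {V : Type*} [Fintype V] [DecidableEq V]
    (G : Finset (Finset V)) {y : Finset V} {r : ℕ} (hy : y.card = r) :
    (G.filter fun a => y ⊆ a).card ≤ famDeg G r :=
  Finset.le_sup (f := fun b => (G.filter fun a => b ⊆ a).card)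
    (Finset.mem_powersetCard.2 ⟨Finset.subset_univ y, hy⟩)

theorem stmt_8 {V : Type*} [Fintype V] [DecidableEq V]
    (m : ℕ) (hm : 2 ≤ m) (G H : Finset (Finset V))
    (hG : ∀ g ∈ G, m ≤ g.card)
    (hH : ∀ h ∈ H, 3 * h.card < m)
    (s : ℕ) (B C : Fin s → Finset (Finset V))
    (hsub : ∀ i, famJoin (B i) (C i) ⊆ G ∪ H)
    (hcover : ∀ g ∈ G, ∃ i, ∃ b ∈ B i, ∃ c ∈ C i,
      b ∪ c = g ∧ m < 3 * b.card ∧ 3 * b.card ≤ 2 * m) :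
    ∃ r : ℕ, m < 3 * r ∧ 3 * r ≤ 2 * m ∧
      G.card ≤ s * (famDeg G r * famDeg G (m - r)) := by
  classical
  have hr0a : m < 3 * (m / 3 + 1) := by omega
  have hr0b : 3 * (m / 3 + 1) ≤ 2 * m := by omega
  rcases G.eq_empty_or_nonempty with hGe | hGne
  · exact ⟨m / 3 + 1, hr0a, hr0b, by simp [hGe]⟩
  obtain ⟨gw, hgw⟩ := hGne
  obtain ⟨iw, -⟩ := hcover gw hgw
  have hsne : Nonempty (Fin s) := ⟨iw⟩
  choose! I bf hbB cf hcC huni hlb hub using hcover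
  -- key per-fiber bound
  have key : ∀ i : Fin s, ∀ g₀, g₀ ∈ G → I g₀ = i →
      (G.filter fun g => I g = i).card ≤
        famDeg G (bf g₀).card * famDeg G (m - (bf g₀).card) := by
    intro i g₀ hg₀ hI₀
    have hb₀B : bf g₀ ∈ B i := hI₀ ▸ hbB g₀ hg₀
    have hlb₀ : m < 3 * (bf g₀).card := hlb g₀ hg₀
    have hxG : ∀ g, g ∈ G → I g = i → bf g₀ ∪ cf g ∈ G := by
      intro g hg hIg
      have hcC' : cf g ∈ C i := hIg ▸ hcC g hg
      have hmem : bf g₀ ∪ cf g ∈ famJoin (B i) (C i) := by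
        simp only [famJoin, Finset.mem_image, Finset.mem_product]
        exact ⟨(bf g₀, cf g), ⟨hb₀B, hcC'⟩, rfl⟩
      rcases Finset.mem_union.1 (hsub i hmem) with h | h
      · exact h
      · exfalso
        have h1 := hH _ h
        have hle : (bf g₀).card ≤ (bf g₀ ∪ cf g).card :=
          Finset.card_le_card Finset.subset_union_left
        omega
    have hsubB : (G.filter fun g => I g = i) ⊆
        (G.filter fun x => bf g₀ ⊆ x).biUnion
          (fun x => G.filter fun g => x \ bf g₀ ⊆ g) := by
      intro g hg
      rw [Finset.mem_filter] at hg
      obtain ⟨hgG, hIg⟩ := hg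
      refine Finset.mem_biUnion.2 ⟨bf g₀ ∪ cf g, ?_, ?_⟩
      · exact Finset.mem_filter.2 ⟨hxG g hgG hIg, Finset.subset_union_left⟩
      · refine Finset.mem_filter.2 ⟨hgG, ?_⟩
        have h1 : (bf g₀ ∪ cf g) \ bf g₀ ⊆ cf g := by
          intro a ha
          rw [Finset.mem_sdiff, Finset.mem_union] at ha
          tauto
        have h2 : cf g ⊆ bf g ∪ cf g := Finset.subset_union_right
        rw [huni g hgG] at h2
        exact h1.trans h2
    calc (G.filter fun g => I g = i).card
        ≤ ((G.filter fun x => bf g₀ ⊆ x).biUnion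
            (fun x => G.filter fun g => x \ bf g₀ ⊆ g)).card :=
          Finset.card_le_card hsubB
      _ ≤ ∑ x ∈ G.filter fun x => bf g₀ ⊆ x,
            (G.filter fun g => x \ bf g₀ ⊆ g).card := Finset.card_biUnion_le
      _ ≤ ∑ _x ∈ G.filter fun x => bf g₀ ⊆ x, famDeg G (m - (bf g₀).card) := by
          refine Finset.sum_le_sum ?_
          intro x hx
          rw [Finset.mem_filter] at hx
          obtain ⟨hxG', hb₀x⟩ := hx
          have hcard : m - (bf g₀).card ≤ (x \ bf g₀).card := by
            have h1 : m ≤ x.card := hG x hxG'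
            have h2 : (x \ bf g₀).card = x.card - (bf g₀).card :=
              Finset.card_sdiff_of_subset hb₀x
            omega
          obtain ⟨y, hys, hycard⟩ :=
            Finset.exists_subset_card_eq hcard
          calc (G.filter fun g => x \ bf g₀ ⊆ g).card
              ≤ (G.filter fun g => y ⊆ g).card := by
                apply Finset.card_le_card
                apply Finset.monotone_filter_right
                intro g _ hg
                exact hys.trans hg
            _ ≤ famDeg G (m - (bf g₀).card) := filter_card_le_famDeg G hycard
      _ = (G.filter fun x => bf g₀ ⊆ x).card * famDeg G (m - (bf g₀).card) := by
          rw [Finset.sum_const, smul_eq_mul]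
      _ ≤ famDeg G (bf g₀).card * famDeg G (m - (bf g₀).card) :=
          Nat.mul_le_mul_right _ (filter_card_le_famDeg G rfl)
  -- choose a good r for each fiber
  have hex : ∀ i : Fin s, ∃ r, (m < 3 * r ∧ 3 * r ≤ 2 * m) ∧
      (G.filter fun g => I g = i).card ≤ famDeg G r * famDeg G (m - r) := by
    intro i
    by_cases h : (G.filter fun g => I g = i).Nonempty
    · obtain ⟨g₀, hg₀⟩ := h
      rw [Finset.mem_filter] at hg₀
      exact ⟨(bf g₀).card, ⟨hlb _ hg₀.1, hub _ hg₀.1⟩, key i g₀ hg₀.1 hg₀.2⟩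
    · refine ⟨m / 3 + 1, ⟨hr0a, hr0b⟩, ?_⟩
      rw [Finset.not_nonempty_iff_eq_empty.1 h]
      simp
  choose R hRrange hfib using hex
  obtain ⟨j, -, hj⟩ := Finset.exists_max_image Finset.univ
      (fun i => famDeg G (R i) * famDeg G (m - R i)) Finset.univ_nonempty
  refine ⟨R j, (hRrange j).1, (hRrange j).2, ?_⟩
  calc G.card = ∑ i : Fin s, (G.filter fun g => I g = i).card :=
        Finset.card_eq_sum_card_fiberwise (fun g _ => Finset.mem_univ _)
    _ ≤ ∑ i : Fin s, famDeg G (R i) * famDeg G (m - R i) :=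
        Finset.sum_le_sum fun i _ => hfib i
    _ ≤ Finset.univ.card • (famDeg G (R j) * famDeg G (m - R j)) :=
        Finset.sum_le_card_nsmul _ _ _ fun i hi => hj i hi
    _ = s * (famDeg G (R j) * famDeg G (m - R j)) := by
        simp [Finset.card_univ]
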